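/- The total number of (1:1) mix-split operations performed by the linear dilution gradient algorithm on a target set of size 2^(k+1) + 1 is 2^(k−1)·(k + 4) − 1, for all k ≥ 1. -/
import Mathlib


/-- Total number of (1:1) mix-split operations of the linear dilution gradient
algorithm on the LDT of depth `k` (target set of size `2^(k+1) + 1`):
one mix per leaf (`2^k`), the internal-node production mixes
(`2^i` nodes at depth `i`, each needing `2^(k−i)` droplets, each mix producing
two droplets), and one regeneration mix per internal node (`2^k − 1`). -/
def totalMixSplit (k : ℕ) : ℕ :=
  2 ^ k + (∑ i ∈ Finset.range k, 2 ^ (k - i) * 2 ^ i) / 2 + (2 ^ k - 1)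

lemma sum_eq (k : ℕ) : (∑ i ∈ Finset.range k, 2 ^ (k - i) * 2 ^ i) = k * 2 ^ k := by
  have : ∀ i ∈ Finset.range k, 2 ^ (k - i) * 2 ^ i = 2 ^ k := by
    intro i hi
    rw [← pow_add, Nat.sub_add_cancel (Finset.mem_range.mp hi).le]
  rw [Finset.sum_congr rfl this, Finset.sum_const, Finset.card_range, smul_eq_mul]

/-- The total number of (1:1) mix-split operations is `2^(k−1)·(k+4) − 1`. -/
theorem stmt_7 (k : ℕ) (hk : 1 ≤ k) :
    totalMixSplit k = 2 ^ (k - 1) * (k + 4) - 1 := by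
  obtain ⟨m, rfl⟩ := Nat.exists_eq_add_of_le hk
  unfold totalMixSplit
  rw [sum_eq]
  simp only [Nat.add_comm 1 m]
  have h2 : (m + 1) * 2 ^ (m + 1) / 2 = (m + 1) * 2 ^ m := by
    rw [pow_succ, ← mul_assoc, Nat.mul_div_cancel _ two_pos]
  rw [h2]
  have h1 : 1 ≤ 2 ^ m := Nat.one_le_two_pow
  have e1 : (m + 1) * 2 ^ m = m * 2 ^ m + 2 ^ m := by ring
  have e2 : 2 ^ m * (m + 1 + 4) = m * 2 ^ m + 2 ^ m * 5 := by ring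
  have e3 : 2 ^ (m + 1) = 2 ^ m * 2 := pow_succ 2 m
  rw [e3, Nat.add_sub_cancel, e1, e2]
  omega
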